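/- arXiv:1511.07489 — 6 statements merged into one kernel-verified Lean document; each statement's English description precedes it below -/
import Mathlib

section
/- Let f(x) = x⁴ + px³ + qx² + rx + s be a monic real quartic with discriminant D. If 3p² - 8q > 0, D1 = p²q² - 3rp³ - 6p²s - 4q³ + 14pqr + 16sq - 18r² > 0, and D > 0, then f has four distinct real roots. -/
lemma quartic_factor_aux (p q r s a b c x : ℝ)
    (h1 : b + c - a^2 = q - 3*p^2/8)
    (h2 : a*(c - b) = r - p*q/2 + p^3/8)
    (h3 : b*c = s - p*r/4 + p^2*q/16 - 3*p^4/256) :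
    x^4 + p*x^3 + q*x^2 + r*x + s =
      ((x+p/4)^2 + a*(x+p/4) + b) * ((x+p/4)^2 - a*(x+p/4) + c) := by
  linear_combination (-(x+p/4)^2)*h1 - (x+p/4)*h2 - h3



lemma quartic_pos_of_eq_mul_sq (D A S : ℝ) (h : D = A*S^2) (hD : 0 < D) : 0 < A := by
  nlinarith [sq_nonneg S]

lemma quartic_ne_of_eq_mul_sq (D A S : ℝ) (h : D = A*S^2) (hD : 0 < D) : S ≠ 0 := by
  intro hS; rw [hS] at h; nlinarith

set_option maxHeartbeats 1000000 in
lemma quartic_key_identity (P Q R w : ℝ)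
    (hC0 : w^3 + 2*P*w^2 + (P^2 - 4*R)*w - Q^2 = 0) :
    256*R^3 - 128*P^2*R^2 + 144*P*Q^2*R - 27*Q^4 + 16*P^4*R - 4*P^3*Q^2
      = (-3*w^2 - 4*P*w + 16*R) * (3*w^2 + 4*P*w + (P^2 - 4*R))^2 := by
  linear_combination (27*w^3 + 54*P*w^2 + 27*P^2*w + 4*P^3 - 108*R*w - 144*P*R + 27*Q^2) * hC0

set_option maxHeartbeats 1000000 in
lemma quartic_D1_depress (p q r s : ℝ) :
    -4*(q - 3*p^2/8)^3 + 16*(q - 3*p^2/8)*(s - p*r/4 + p^2*q/16 - 3*p^4/256)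
      - 18*(r - p*q/2 + p^3/8)^2
    = p^2*q^2 - 3*r*p^3 - 6*p^2*s - 4*q^3 + 14*p*q*r + 16*s*q - 18*r^2 := by
  ring

set_option maxHeartbeats 2000000 in
lemma quartic_D_depress (p q r s : ℝ) :
    256*(s - p*r/4 + p^2*q/16 - 3*p^4/256)^3
      - 128*(q - 3*p^2/8)^2*(s - p*r/4 + p^2*q/16 - 3*p^4/256)^2
      + 144*(q - 3*p^2/8)*(r - p*q/2 + p^3/8)^2*(s - p*r/4 + p^2*q/16 - 3*p^4/256)
      - 27*(r - p*q/2 + p^3/8)^4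
      + 16*(q - 3*p^2/8)^4*(s - p*r/4 + p^2*q/16 - 3*p^4/256)
      - 4*(q - 3*p^2/8)^3*(r - p*q/2 + p^3/8)^2
    = 18*p^3*r*q*s - 4*q^3*p^2*s + 144*s*r^2*q + q^2*p^2*r^2 - 192*p*r*s^2 + 144*q*p^2*s^2 + 18*p*r^3*q - 4*p^3*r^3 - 128*q^2*s^2 + 16*q^4*s - 4*q^3*r^2 - 27*p^4*s^2 - 80*p*r*q^2*s - 6*p^2*r^2*s + 256*s^3 - 27*r^4 := by
  ring

set_option maxHeartbeats 4000000 in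
theorem quartic_four_distinct_real_roots (p q r s : ℝ)
    (hpq : 3 * p ^ 2 - 8 * q > 0)
    (hD1 : (p^2*q^2 - 3*r*p^3 - 6*p^2*s - 4*q^3 + 14*p*q*r + 16*s*q - 18*r^2) > 0)
    (hD : (18*p^3*r*q*s - 4*q^3*p^2*s + 144*s*r^2*q + q^2*p^2*r^2 - 192*p*r*s^2 + 144*q*p^2*s^2 + 18*p*r^3*q - 4*p^3*r^3 - 128*q^2*s^2 + 16*q^4*s - 4*q^3*r^2 - 27*p^4*s^2 - 80*p*r*q^2*s - 6*p^2*r^2*s + 256*s^3 - 27*r^4) > 0) :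
    ∃ a b c d : ℝ, a ≠ b ∧ a ≠ c ∧ a ≠ d ∧ b ≠ c ∧ b ≠ d ∧ c ≠ d ∧
      a ^ 4 + p * a ^ 3 + q * a ^ 2 + r * a + s = 0 ∧
      b ^ 4 + p * b ^ 3 + q * b ^ 2 + r * b + s = 0 ∧
      c ^ 4 + p * c ^ 3 + q * c ^ 2 + r * c + s = 0 ∧
      d ^ 4 + p * d ^ 3 + q * d ^ 2 + r * d + s = 0 := by
  set P : ℝ := q - 3*p^2/8 with hPeq
  set Q : ℝ := r - p*q/2 + p^3/8 with hQeq
  set R : ℝ := s - p*r/4 + p^2*q/16 - 3*p^4/256 with hReq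
  have hP : P < 0 := by rw [hPeq]; linarith
  have hD1' : (0:ℝ) < -4*P^3 + 16*P*R - 18*Q^2 := by
    rw [hPeq, hQeq, hReq, quartic_D1_depress p q r s]; exact hD1
  have hDd : (0:ℝ) < 256*R^3 - 128*P^2*R^2 + 144*P*Q^2*R - 27*Q^4 + 16*P^4*R - 4*P^3*Q^2 := by
    rw [hPeq, hQeq, hReq, quartic_D_depress p q r s]; exact hD
  have hP2R : (0:ℝ) < P^2 - 4*R := by
    by_contra h
    push_neg at h
    have h1 : (0:ℝ) ≤ (-4*P) * (4*R - P^2) :=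
      mul_nonneg (by linarith) (by linarith)
    nlinarith [sq_nonneg Q]
  -- get a root z of the resolvent cubic in (l, -2P)
  have hCont : Continuous (fun z : ℝ => z^3 + 2*P*z^2 + (P^2 - 4*R)*z - Q^2) := by
    continuity
  have hCu : (0:ℝ) < (-2*P)^3 + 2*P*(-2*P)^2 + (P^2 - 4*R)*(-2*P) - Q^2 := by
    nlinarith [sq_nonneg Q]
  obtain ⟨l, hl0, hlu, hCl⟩ :
      ∃ l : ℝ, 0 ≤ l ∧ l < -2*P ∧ l^3 + 2*P*l^2 + (P^2 - 4*R)*l - Q^2 < 0 := by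
    rcases eq_or_ne Q 0 with hQ0 | hQ0
    · -- Q = 0 : use l = -P, need R > 0
      have hDd0 : (0:ℝ) < 16*R*(P^2 - 4*R)^2 := by
        rw [hQ0] at hDd; nlinarith [hDd]
      have hR : (0:ℝ) < R := by nlinarith [sq_nonneg (P^2 - 4*R)]
      refine ⟨-P, by linarith, by linarith, ?_⟩
      rw [hQ0]
      nlinarith [mul_pos hR (show (0:ℝ) < -P by linarith)]
    · refine ⟨0, le_refl _, by linarith, ?_⟩
      have hQ2 : (0:ℝ) < Q^2 := lt_of_le_of_ne (sq_nonneg Q) (Ne.symm (pow_ne_zero 2 hQ0))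
      nlinarith
  obtain ⟨w, hwmem, hweq⟩ :
      ∃ w ∈ Set.Ioo l (-2*P),
        (fun z : ℝ => z^3 + 2*P*z^2 + (P^2 - 4*R)*z - Q^2) w = 0 := by
    have hsub := intermediate_value_Ioo (le_of_lt hlu) hCont.continuousOn
    have h0mem : (0:ℝ) ∈ Set.Ioo ((fun z : ℝ => z^3 + 2*P*z^2 + (P^2 - 4*R)*z - Q^2) l)
        ((fun z : ℝ => z^3 + 2*P*z^2 + (P^2 - 4*R)*z - Q^2) (-2*P)) := by
      simp only [Set.mem_Ioo]; exact ⟨hCl, hCu⟩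
    obtain ⟨w, hw1, hw2⟩ := hsub h0mem
    exact ⟨w, hw1, hw2⟩
  have hC0 : w^3 + 2*P*w^2 + (P^2 - 4*R)*w - Q^2 = 0 := by simpa using hweq
  have hw0 : 0 < w := lt_of_le_of_lt hl0 hwmem.1
  have hwlt : w < -2*P := hwmem.2
  have hwne : w ≠ 0 := ne_of_gt hw0
  -- square root of w
  set a0 : ℝ := Real.sqrt w with ha0eq
  have ha0 : 0 < a0 := Real.sqrt_pos.mpr hw0
  have ha2 : a0^2 = w := Real.sq_sqrt hw0.le
  have ha0ne : a0 ≠ 0 := ne_of_gt ha0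
  set b0 : ℝ := (P + w - Q/a0)/2 with hb0eq
  set c0 : ℝ := (P + w + Q/a0)/2 with hc0eq
  have hQaz : w*(Q/a0)^2 = Q^2 := by
    rw [div_pow, ha2]
    field_simp
  -- key discriminant identity
  have hKey := quartic_key_identity P Q R w hC0
  have hB : (0:ℝ) < -3*w^2 - 4*P*w + 16*R := quartic_pos_of_eq_mul_sq _ _ _ hKey hDd
  have hCpne : (3*w^2 + 4*P*w + (P^2 - 4*R)) ≠ 0 := quartic_ne_of_eq_mul_sq _ _ _ hKey hDd
  -- discriminants of the two quadratic factors
  set d1 : ℝ := -(w + 2*P) + 2*(Q/a0) with hd1eq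
  set d2 : ℝ := -(w + 2*P) - 2*(Q/a0) with hd2eq
  have hd12 : w*(d1*d2) = w*(-3*w^2 - 4*P*w + 16*R) := by
    rw [hd1eq, hd2eq]
    linear_combination 4*hC0 - 4*hQaz
  have hd12' : d1*d2 = -3*w^2 - 4*P*w + 16*R := mul_left_cancel₀ hwne hd12
  have hdsum : 0 < d1 + d2 := by rw [hd1eq, hd2eq]; linarith
  have hd1pos : 0 < d1 := by nlinarith [hd12', hB, hdsum]
  have hd2pos : 0 < d2 := pos_of_mul_pos_right (by linarith [hd12', hB] : (0:ℝ) < d1*d2) hd1pos.le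
  set e1 : ℝ := Real.sqrt d1 with he1eq
  set e2 : ℝ := Real.sqrt d2 with he2eq
  have he1 : e1^2 = d1 := Real.sq_sqrt hd1pos.le
  have he2 : e2^2 = d2 := Real.sq_sqrt hd2pos.le
  have he1pos : 0 < e1 := Real.sqrt_pos.mpr hd1pos
  have he2pos : 0 < e2 := Real.sqrt_pos.mpr hd2pos
  have ha4b : a0^2 - 4*b0 = d1 := by rw [hd1eq, hb0eq]; linear_combination ha2
  have ha4c : a0^2 - 4*c0 = d2 := by rw [hd2eq, hc0eq]; linear_combination ha2
  have he1' : e1^2 = a0^2 - 4*b0 := he1.trans ha4b.symm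
  have he2' : e2^2 = a0^2 - 4*c0 := he2.trans ha4c.symm
  -- the four roots (of the depressed quartic)
  set y1 : ℝ := (-a0 + e1)/2 with hy1eq
  set y2 : ℝ := (-a0 - e1)/2 with hy2eq
  set y3 : ℝ := (a0 + e2)/2 with hy3eq
  set y4 : ℝ := (a0 - e2)/2 with hy4eq
  have hq1 : y1^2 + a0*y1 + b0 = 0 := by rw [hy1eq]; linear_combination he1'/4
  have hq2 : y2^2 + a0*y2 + b0 = 0 := by rw [hy2eq]; linear_combination he1'/4
  have hq3 : y3^2 - a0*y3 + c0 = 0 := by rw [hy3eq]; linear_combination he2'/4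
  have hq4 : y4^2 - a0*y4 + c0 = 0 := by rw [hy4eq]; linear_combination he2'/4
  -- the factorization hypotheses
  have h1 : b0 + c0 - a0^2 = q - 3*p^2/8 := by
    rw [hb0eq, hc0eq, ← hPeq]; linear_combination -ha2
  have h2 : a0*(c0 - b0) = r - p*q/2 + p^3/8 := by
    rw [hb0eq, hc0eq, ← hQeq]; field_simp; ring
  have h3 : b0*c0 = s - p*r/4 + p^2*q/16 - 3*p^4/256 := by
    have h3z : w*(b0*c0) = w*R := by
      rw [hb0eq, hc0eq]
      linear_combination hC0/4 - hQaz/4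
    have := mul_left_cancel₀ hwne h3z
    rw [this, hReq]
  -- non-vanishing of quadratic 2 at roots of quadratic 1 (cross distinctness)
  have step1 : (y1^2 - a0*y1 + c0)*(y2^2 - a0*y2 + c0) = 2*a0^2*(b0 + c0) + (c0 - b0)^2 := by
    rw [hy1eq, hy2eq]
    linear_combination (c0/2 - b0/4 + e1^2/16 - 9*a0^2/16) * he1'
  have step2 : w*(2*a0^2*(b0 + c0) + (c0 - b0)^2) = w*(3*w^2 + 4*P*w + (P^2 - 4*R)) := by
    rw [hb0eq, hc0eq]
    linear_combination (2*w*(P + w))*ha2 + hQaz - hC0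
  have stepM : (y1^2 - a0*y1 + c0)*(y2^2 - a0*y2 + c0) = 3*w^2 + 4*P*w + (P^2 - 4*R) := by
    rw [step1]; exact mul_left_cancel₀ hwne step2
  have hMne : (y1^2 - a0*y1 + c0)*(y2^2 - a0*y2 + c0) ≠ 0 := by
    rw [stepM]; exact hCpne
  -- distinctness of the y's
  have hy12 : y1 ≠ y2 := by
    intro h; rw [hy1eq, hy2eq] at h
    have : e1 = 0 := by linarith
    exact (ne_of_gt he1pos) this
  have hy34 : y3 ≠ y4 := by
    intro h; rw [hy3eq, hy4eq] at h
    have : e2 = 0 := by linarith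
    exact (ne_of_gt he2pos) this
  have hy13 : y1 ≠ y3 := by
    intro h
    apply hMne
    have hz : y1^2 - a0*y1 + c0 = 0 := by rw [h]; exact hq3
    rw [hz, zero_mul]
  have hy14 : y1 ≠ y4 := by
    intro h
    apply hMne
    have hz : y1^2 - a0*y1 + c0 = 0 := by rw [h]; exact hq4
    rw [hz, zero_mul]
  have hy23 : y2 ≠ y3 := by
    intro h
    apply hMne
    have hz : y2^2 - a0*y2 + c0 = 0 := by rw [h]; exact hq3
    rw [hz, mul_zero]
  have hy24 : y2 ≠ y4 := by
    intro h
    apply hMne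
    have hz : y2^2 - a0*y2 + c0 = 0 := by rw [h]; exact hq4
    rw [hz, mul_zero]
  -- roots of the original quartic
  refine ⟨y1 - p/4, y2 - p/4, y3 - p/4, y4 - p/4,
    fun h => hy12 (by linarith), fun h => hy13 (by linarith), fun h => hy14 (by linarith),
    fun h => hy23 (by linarith), fun h => hy24 (by linarith), fun h => hy34 (by linarith),
    ?_, ?_, ?_, ?_⟩
  · rw [quartic_factor_aux p q r s a0 b0 c0 _ h1 h2 h3,
      show y1 - p/4 + p/4 = y1 from by ring]
    exact mul_eq_zero_of_left hq1 _
  · rw [quartic_factor_aux p q r s a0 b0 c0 _ h1 h2 h3,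
      show y2 - p/4 + p/4 = y2 from by ring]
    exact mul_eq_zero_of_left hq2 _
  · rw [quartic_factor_aux p q r s a0 b0 c0 _ h1 h2 h3,
      show y3 - p/4 + p/4 = y3 from by ring]
    exact mul_eq_zero_of_right _ hq3
  · rw [quartic_factor_aux p q r s a0 b0 c0 _ h1 h2 h3,
      show y4 - p/4 + p/4 = y4 from by ring]
    exact mul_eq_zero_of_right _ hq4
end

section
/- Let f(x) = x⁴ + px³ + qx² + rx + s with discriminant D > 0. If 3p² - 8q ≤ 0 or D1 = p²q² - 3rp³ - 6p²s - 4q³ + 14pqr + 16sq - 18r² ≤ 0, then f has no real roots (four distinct complex roots). -/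
private lemma cubic_root (a b c : ℝ) : ∃ x : ℝ, x^3 + a*x^2 + b*x + c = 0 := by
  set M : ℝ := 1 + |a| + |b| + |c| with hMdef
  have hM1 : 1 ≤ M := by
    have := abs_nonneg a; have := abs_nonneg b; have := abs_nonneg c
    simp only [hMdef]; linarith
  have hMpos : (0:ℝ) < M := by linarith
  have hMeq : |a| + |b| + |c| = M - 1 := by simp only [hMdef]; ring
  have hb2 : 0 ≤ |b| * M * (M - 1) :=
    mul_nonneg (mul_nonneg (abs_nonneg b) hMpos.le) (by linarith)
  have hc2 : 0 ≤ |c| * (M^2 - 1) :=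
    mul_nonneg (abs_nonneg c) (by nlinarith)
  have ea : (-|a|)*M^2 ≤ a*M^2 := mul_le_mul_of_nonneg_right (neg_abs_le a) (sq_nonneg M)
  have ea' : a*M^2 ≤ |a| * M^2 := mul_le_mul_of_nonneg_right (le_abs_self a) (sq_nonneg M)
  have hb1 : 0 ≤ (b + |b|) * M := mul_nonneg (by linarith [neg_abs_le b]) hMpos.le
  have hb1' : 0 ≤ (|b| - b) * M := mul_nonneg (by linarith [le_abs_self b]) hMpos.le
  have eb : (-|b|)*M^2 ≤ b*M := by nlinarith
  have eb' : -(b*M) ≤ (|b|) * (M^2) := by nlinarith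
  have ec : (-|c|)*M^2 ≤ c := by nlinarith [neg_abs_le c]
  have ec' : c ≤ (|c|) * (M^2) := by nlinarith [le_abs_self c]
  have h2 : 0 ≤ M^3 + a*M^2 + b*M + c := by nlinarith [sq_nonneg M]
  have h1 : (-M)^3 + a*(-M)^2 + b*(-M) + c ≤ 0 := by nlinarith [sq_nonneg M]
  have hcont : Continuous fun x : ℝ => x^3 + a*x^2 + b*x + c := by continuity
  obtain ⟨x, _, hx⟩ := intermediate_value_Icc (by linarith : -M ≤ M) hcont.continuousOn
    (Set.mem_Icc.mpr ⟨h1, h2⟩)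
  exact ⟨x, hx⟩

set_option maxHeartbeats 3200000 in
private lemma quartic_noroot (p q r s : ℝ)
    (hD : (18*p^3*r*q*s - 4*q^3*p^2*s + 144*s*r^2*q + q^2*p^2*r^2 - 192*p*r*s^2 + 144*q*p^2*s^2 + 18*p*r^3*q - 4*p^3*r^3 - 128*q^2*s^2 + 16*q^4*s - 4*q^3*r^2 - 27*p^4*s^2 - 80*p*r*q^2*s - 6*p^2*r^2*s + 256*s^3 - 27*r^4) > 0)
    (h : 3 * p ^ 2 - 8 * q ≤ 0 ∨ (p^2*q^2 - 3*r*p^3 - 6*p^2*s - 4*q^3 + 14*p*q*r + 16*s*q - 18*r^2) ≤ 0) :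
    ∀ x : ℝ, x ^ 4 + p * x ^ 3 + q * x ^ 2 + r * x + s ≠ 0 := by
  intro x0 hx0
  obtain ⟨x1, hx1⟩ := cubic_root (p + x0) (q + p*x0 + x0^2) (r + q*x0 + p*x0^2 + x0^3)
  obtain ⟨u, hu⟩ : ∃ u : ℝ, u = p + x0 + x1 := ⟨_, rfl⟩
  obtain ⟨v, hv⟩ : ∃ v : ℝ, v = q + p*x0 + x0^2 + (p + x0)*x1 + x1^2 := ⟨_, rfl⟩
  have hp : p = u - (x0 + x1) := by rw [hu]; ring
  have hq : q = v + x0*x1 - u*(x0 + x1) := by rw [hv, hu]; ring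
  have hr : r = u*(x0*x1) - v*(x0 + x1) := by rw [hu, hv]; linear_combination hx1
  have hs : s = v*(x0*x1) := by rw [hv]; linear_combination hx0 - x0 * hx1
  have hDid : (18*p^3*r*q*s - 4*q^3*p^2*s + 144*s*r^2*q + q^2*p^2*r^2 - 192*p*r*s^2 + 144*q*p^2*s^2 + 18*p*r^3*q - 4*p^3*r^3 - 128*q^2*s^2 + 16*q^4*s - 4*q^3*r^2 - 27*p^4*s^2 - 80*p*r*q^2*s - 6*p^2*r^2*s + 256*s^3 - 27*r^4)
      = (u^2-4*v) * ((x0-x1)*((x0^2+u*x0+v)*(x1^2+u*x1+v)))^2 := by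
    rw [hp, hq, hr, hs]; ring
  have hpos : 0 < (u^2-4*v) * ((x0-x1)*((x0^2+u*x0+v)*(x1^2+u*x1+v)))^2 := hDid ▸ hD
  have hmid : 0 < u^2 - 4*v := by
    rcases lt_trichotomy (u^2-4*v) 0 with hlt | heq | hgt
    · exact absurd hpos (not_lt.mpr (mul_nonpos_iff.mpr (Or.inr ⟨hlt.le, sq_nonneg _⟩)))
    · rw [heq, zero_mul] at hpos; exact absurd hpos (lt_irrefl 0)
    · exact hgt
  have ht : (Real.sqrt (u^2-4*v))^2 = u^2 - 4*v := Real.sq_sqrt hmid.le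
  obtain ⟨t, htdef⟩ : ∃ t : ℝ, t = Real.sqrt (u^2-4*v) := ⟨_, rfl⟩
  rw [← htdef] at ht
  obtain ⟨x2, hx2⟩ : ∃ y : ℝ, y = (-u+t)/2 := ⟨_, rfl⟩
  obtain ⟨x3, hx3⟩ : ∃ y : ℝ, y = (-u-t)/2 := ⟨_, rfl⟩
  have hP : p = -(x0+x1+x2+x3) := by rw [hp, hx2, hx3]; ring
  have hQ : q = x0*x1 + x0*x2 + x0*x3 + x1*x2 + x1*x3 + x2*x3 := by
    rw [hq, hx2, hx3]; linear_combination ((1:ℝ)/4) * ht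
  have hR : r = -(x0*x1*x2 + x0*x1*x3 + x0*x2*x3 + x1*x2*x3) := by
    rw [hr, hx2, hx3]; linear_combination (-(x0+x1)/4) * ht
  have hS : s = x0*x1*x2*x3 := by
    rw [hs, hx2, hx3]; linear_combination ((x0*x1)/4) * ht
  have hDroots : (18*p^3*r*q*s - 4*q^3*p^2*s + 144*s*r^2*q + q^2*p^2*r^2 - 192*p*r*s^2 + 144*q*p^2*s^2 + 18*p*r^3*q - 4*p^3*r^3 - 128*q^2*s^2 + 16*q^4*s - 4*q^3*r^2 - 27*p^4*s^2 - 80*p*r*q^2*s - 6*p^2*r^2*s + 256*s^3 - 27*r^4)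
      = ((x0-x1)*(x0-x2)*(x0-x3)*(x1-x2)*(x1-x3)*(x2-x3))^2 := by
    rw [hP, hQ, hR, hS]; ring
  have hne : (x0-x1)*(x0-x2)*(x0-x3)*(x1-x2)*(x1-x3)*(x2-x3) ≠ 0 := by
    intro h0
    rw [hDroots, h0] at hD
    norm_num at hD
  have h01 : x0 - x1 ≠ 0 := by intro h0; apply hne; rw [h0]; ring
  have h02 : x0 - x2 ≠ 0 := by intro h0; apply hne; rw [h0]; ring
  have h03 : x0 - x3 ≠ 0 := by intro h0; apply hne; rw [h0]; ring
  have h12 : x1 - x2 ≠ 0 := by intro h0; apply hne; rw [h0]; ring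
  have h13 : x1 - x3 ≠ 0 := by intro h0; apply hne; rw [h0]; ring
  have h23 : x2 - x3 ≠ 0 := by intro h0; apply hne; rw [h0]; ring
  rcases h with h1 | h2
  · have hsum : 3*p^2 - 8*q
        = (x0-x1)^2 + (x0-x2)^2 + (x0-x3)^2 + (x1-x2)^2 + (x1-x3)^2 + (x2-x3)^2 := by
      rw [hP, hQ]; ring
    have p01 : 0 < (x0-x1)^2 := lt_of_le_of_ne (sq_nonneg _) (Ne.symm (pow_ne_zero 2 h01))
    have p02 : 0 < (x0-x2)^2 := lt_of_le_of_ne (sq_nonneg _) (Ne.symm (pow_ne_zero 2 h02))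
    have p03 : 0 < (x0-x3)^2 := lt_of_le_of_ne (sq_nonneg _) (Ne.symm (pow_ne_zero 2 h03))
    have p12 : 0 < (x1-x2)^2 := lt_of_le_of_ne (sq_nonneg _) (Ne.symm (pow_ne_zero 2 h12))
    have p13 : 0 < (x1-x3)^2 := lt_of_le_of_ne (sq_nonneg _) (Ne.symm (pow_ne_zero 2 h13))
    have p23 : 0 < (x2-x3)^2 := lt_of_le_of_ne (sq_nonneg _) (Ne.symm (pow_ne_zero 2 h23))
    linarith
  · have hsum2 : 2*(p^2*q^2 - 3*r*p^3 - 6*p^2*s - 4*q^3 + 14*p*q*r + 16*s*q - 18*r^2)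
        = ((x0-x1)*(x1-x2)*(x0-x2))^2 + ((x0-x1)*(x1-x3)*(x0-x3))^2
          + ((x0-x2)*(x2-x3)*(x0-x3))^2 + ((x1-x2)*(x2-x3)*(x1-x3))^2 := by
      rw [hP, hQ, hR, hS]; ring
    have T1 : 0 < ((x0-x1)*(x1-x2)*(x0-x2))^2 :=
      lt_of_le_of_ne (sq_nonneg _) (Ne.symm (pow_ne_zero 2 (mul_ne_zero (mul_ne_zero h01 h12) h02)))
    have T2 : 0 < ((x0-x1)*(x1-x3)*(x0-x3))^2 :=
      lt_of_le_of_ne (sq_nonneg _) (Ne.symm (pow_ne_zero 2 (mul_ne_zero (mul_ne_zero h01 h13) h03)))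
    have T3 : 0 < ((x0-x2)*(x2-x3)*(x0-x3))^2 :=
      lt_of_le_of_ne (sq_nonneg _) (Ne.symm (pow_ne_zero 2 (mul_ne_zero (mul_ne_zero h02 h23) h03)))
    have T4 : 0 < ((x1-x2)*(x2-x3)*(x1-x3))^2 :=
      lt_of_le_of_ne (sq_nonneg _) (Ne.symm (pow_ne_zero 2 (mul_ne_zero (mul_ne_zero h12 h23) h13)))
    linarith

set_option maxHeartbeats 3200000 in
open Polynomial in
theorem quartic_no_real_roots (p q r s : ℝ)
    (hD : (18*p^3*r*q*s - 4*q^3*p^2*s + 144*s*r^2*q + q^2*p^2*r^2 - 192*p*r*s^2 + 144*q*p^2*s^2 + 18*p*r^3*q - 4*p^3*r^3 - 128*q^2*s^2 + 16*q^4*s - 4*q^3*r^2 - 27*p^4*s^2 - 80*p*r*q^2*s - 6*p^2*r^2*s + 256*s^3 - 27*r^4) > 0)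
    (h : 3 * p ^ 2 - 8 * q ≤ 0 ∨ (p^2*q^2 - 3*r*p^3 - 6*p^2*s - 4*q^3 + 14*p*q*r + 16*s*q - 18*r^2) ≤ 0) :
    (∀ x : ℝ, x ^ 4 + p * x ^ 3 + q * x ^ 2 + r * x + s ≠ 0) ∧
    ∃ z w : ℂ, z.im ≠ 0 ∧ w.im ≠ 0 ∧ z ≠ w ∧ z ≠ (starRingEnd ℂ) w ∧
      (X ^ 4 + C p * X ^ 3 + C q * X ^ 2 + C r * X + C s : ℝ[X]).map
          (algebraMap ℝ ℂ) =
        (X - C z) * (X - C ((starRingEnd ℂ) z)) * (X - C w) *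
          (X - C ((starRingEnd ℂ) w)) := by
  have noroot := quartic_noroot p q r s hD h
  refine ⟨noroot, ?_⟩
  have hmap : (X ^ 4 + C p * X ^ 3 + C q * X ^ 2 + C r * X + C s : ℝ[X]).map (algebraMap ℝ ℂ)
      = X ^ 4 + C ((p:ℂ)) * X ^ 3 + C ((q:ℂ)) * X ^ 2 + C ((r:ℂ)) * X + C ((s:ℂ)) := by
    simp [Polynomial.map_add, Polynomial.map_mul, Polynomial.map_pow, Polynomial.map_X,
      Polynomial.map_C, Complex.coe_algebraMap]
  have hdegpos : 0 < ((X ^ 4 + C p * X ^ 3 + C q * X ^ 2 + C r * X + C s : ℝ[X]).map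
      (algebraMap ℝ ℂ)).degree := by
    rw [hmap]
    have hd : (X ^ 4 + C ((p:ℂ)) * X ^ 3 + C ((q:ℂ)) * X ^ 2 + C ((r:ℂ)) * X
        + C ((s:ℂ)) : ℂ[X]).degree = 4 := by compute_degree!
    rw [hd]; norm_num
  obtain ⟨z, hz⟩ := Complex.exists_root hdegpos
  rw [Polynomial.IsRoot.def, hmap] at hz
  have hzeq : z ^ 4 + (p:ℂ) * z ^ 3 + (q:ℂ) * z ^ 2 + (r:ℂ) * z + (s:ℂ) = 0 := by
    simpa using hz
  have him : z.im ≠ 0 := by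
    intro h0
    have hzre : ((z.re : ℂ)) = z := by
      apply Complex.ext <;> simp [h0]
    apply noroot z.re
    have : ((z.re ^ 4 + p * z.re ^ 3 + q * z.re ^ 2 + r * z.re + s : ℝ) : ℂ) = 0 := by
      push_cast
      rw [hzre]
      exact hzeq
    exact_mod_cast this
  obtain ⟨β, hβ⟩ : ∃ β : ℝ, β = -(2 * z.re) := ⟨_, rfl⟩
  obtain ⟨γ, hγ⟩ : ∃ γ : ℝ, γ = z.re^2 + z.im^2 := ⟨_, rfl⟩
  have hquad : z ^ 2 + (β:ℂ) * z + (γ:ℂ) = 0 := by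
    apply Complex.ext <;>
      simp [hβ, hγ, pow_two, Complex.add_re, Complex.add_im, Complex.mul_re, Complex.mul_im] <;>
      ring
  obtain ⟨b, hb⟩ : ∃ b : ℝ, b = p - β := ⟨_, rfl⟩
  obtain ⟨c, hc⟩ : ∃ c : ℝ, c = q - γ - β*b := ⟨_, rfl⟩
  have hlin : ((r - β*c - γ*b : ℝ) : ℂ) * z + ((s - γ*c : ℝ) : ℂ) = 0 := by
    have h1 : ((r - β*c - γ*b : ℝ) : ℂ) * z + ((s - γ*c : ℝ) : ℂ)
        = (z ^ 4 + (p:ℂ) * z ^ 3 + (q:ℂ) * z ^ 2 + (r:ℂ) * z + (s:ℂ))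
          - (z ^ 2 + (β:ℂ) * z + (γ:ℂ)) * (z ^ 2 + (b:ℂ) * z + (c:ℂ)) := by
      rw [hc, hb]
      push_cast
      ring
    rw [h1, hzeq, hquad]
    ring
  have he0 : r - β*c - γ*b = 0 := by
    have him2 := congrArg Complex.im hlin
    simp [Complex.add_im, Complex.mul_im] at him2
    rcases him2 with h' | h'
    · exact h'
    · exact absurd h' him
  have hd0 : s - γ*c = 0 := by
    have hre2 := congrArg Complex.re hlin
    simp [Complex.add_re, Complex.mul_re, he0] at hre2
    exact hre2
  have hpβ : p = β + b := by rw [hb]; ring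
  have hqγ : q = γ + c + β*b := by rw [hc]; ring
  have hrγ : r = β*c + γ*b := by linarith
  have hsγ : s = γ*c := by linarith
  have hfact : ∀ x : ℝ, x ^ 4 + p*x^3 + q*x^2 + r*x + s = (x^2 + β*x + γ)*(x^2 + b*x + c) := by
    intro x
    rw [hpβ, hqγ, hrγ, hsγ]; ring
  have hdisc : b^2 - 4*c < 0 := by
    by_contra hge
    push_neg at hge
    have ht : (Real.sqrt (b^2 - 4*c))^2 = b^2 - 4*c := Real.sq_sqrt hge
    set x := (-b + Real.sqrt (b^2-4*c))/2 with hx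
    apply noroot x
    have hroot : x^2 + b*x + c = 0 := by
      rw [hx]; linear_combination ((1:ℝ)/4) * ht
    rw [hfact x, hroot, mul_zero]
  have hdisc' : 0 < 4*c - b^2 := by linarith
  obtain ⟨t', htd⟩ : ∃ t' : ℝ, t' = Real.sqrt (4*c - b^2) := ⟨_, rfl⟩
  have ht' : t'^2 = 4*c - b^2 := by rw [htd]; exact Real.sq_sqrt hdisc'.le
  have ht'pos : 0 < t' := by rw [htd]; exact Real.sqrt_pos.mpr hdisc'
  set w : ℂ := ⟨-b/2, t'/2⟩ with hw
  have hwre : w.re = -b/2 := rfl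
  have hwim' : w.im = t'/2 := rfl
  have hwim : w.im ≠ 0 := by rw [hwim']; positivity
  have hwquad : w ^ 2 + (b:ℂ) * w + (c:ℂ) = 0 := by
    apply Complex.ext
    · simp [pow_two, Complex.add_re, Complex.mul_re, hwre, hwim']
      linear_combination (-(1:ℝ)/4) * ht'
    · simp [pow_two, Complex.add_im, Complex.mul_im, hwre, hwim']
      ring
  -- distinctness via discriminant
  have hcontra : β = b → γ = c → False := by
    intro hβb hγc
    have hzero : (18*p^3*r*q*s - 4*q^3*p^2*s + 144*s*r^2*q + q^2*p^2*r^2 - 192*p*r*s^2 + 144*q*p^2*s^2 + 18*p*r^3*q - 4*p^3*r^3 - 128*q^2*s^2 + 16*q^4*s - 4*q^3*r^2 - 27*p^4*s^2 - 80*p*r*q^2*s - 6*p^2*r^2*s + 256*s^3 - 27*r^4) = 0 := by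
      rw [hpβ, hqγ, hrγ, hsγ, hβb, hγc]; ring
    rw [hzero] at hD
    exact lt_irrefl 0 hD
  have hznw : z ≠ w := by
    intro hzw
    apply hcontra
    · rw [hβ, hzw, hwre]; ring
    · rw [hγ, hzw, hwre, hwim']
      nlinarith [ht']
  have hznwc : z ≠ (starRingEnd ℂ) w := by
    intro hzw
    have hre : z.re = w.re := by rw [hzw]; exact Complex.conj_re w
    have him' : z.im = -w.im := by rw [hzw]; exact Complex.conj_im w
    apply hcontra
    · rw [hβ, hre, hwre]; ring
    · rw [hγ, hre, him', hwre, hwim']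
      nlinarith [ht']
  refine ⟨z, w, him, hwim, hznw, hznwc, ?_⟩
  -- coefficient relations over ℂ
  have hγz : (γ:ℂ) = -(β:ℂ)*z - z^2 := by linear_combination hquad
  have hcw : (c:ℂ) = -(b:ℂ)*w - w^2 := by linear_combination hwquad
  have hconjz : (starRingEnd ℂ) z = -(β:ℂ) - z := by
    apply Complex.ext <;> simp [hβ, Complex.conj_re, Complex.conj_im] <;> ring
  have hconjw : (starRingEnd ℂ) w = -(b:ℂ) - w := by
    apply Complex.ext <;> simp [hwre, hwim', Complex.conj_re, Complex.conj_im] <;> ring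
  have hpc : ((p:ℝ) : ℂ) = (β:ℂ) + (b:ℂ) := by exact_mod_cast congrArg (Complex.ofReal) hpβ
  have hqc : ((q:ℝ) : ℂ) = (γ:ℂ) + (c:ℂ) + (β:ℂ)*(b:ℂ) := by
    exact_mod_cast congrArg (Complex.ofReal) hqγ
  have hrc : ((r:ℝ) : ℂ) = (β:ℂ)*(c:ℂ) + (γ:ℂ)*(b:ℂ) := by
    exact_mod_cast congrArg (Complex.ofReal) hrγ
  have hsc : ((s:ℝ) : ℂ) = (γ:ℂ)*(c:ℂ) := by exact_mod_cast congrArg (Complex.ofReal) hsγ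
  apply Polynomial.funext
  intro x
  rw [hmap]
  simp only [Polynomial.eval_add, Polynomial.eval_mul, Polynomial.eval_sub,
    Polynomial.eval_pow, Polynomial.eval_X, Polynomial.eval_C]
  rw [hconjz, hconjw, hpc, hqc, hrc, hsc, hγz, hcw]
  ring
end

section
/- Let f(x) = x⁴ + px³ + qx² + rx + s with discriminant D = 0 and D1 = p²q² - 3rp³ - 6p²s - 4q³ + 14pqr + 16sq - 18r² > 0. Then f has exactly one real double root and two distinct real simple roots. -/
set_option maxHeartbeats 1600000

open Polynomial in
theorem quartic_double_and_two_real_simple (p q r s : ℝ)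
    (hD : (18*p^3*r*q*s - 4*q^3*p^2*s + 144*s*r^2*q + q^2*p^2*r^2 - 192*p*r*s^2 + 144*q*p^2*s^2 + 18*p*r^3*q - 4*p^3*r^3 - 128*q^2*s^2 + 16*q^4*s - 4*q^3*r^2 - 27*p^4*s^2 - 80*p*r*q^2*s - 6*p^2*r^2*s + 256*s^3 - 27*r^4) = 0)
    (hD1 : (p^2*q^2 - 3*r*p^3 - 6*p^2*s - 4*q^3 + 14*p*q*r + 16*s*q - 18*r^2) > 0) :
    ∃ α a b : ℝ, α ≠ a ∧ α ≠ b ∧ a ≠ b ∧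
      (X ^ 4 + C p * X ^ 3 + C q * X ^ 2 + C r * X + C s : ℝ[X]) =
        (X - C α) ^ 2 * (X - C a) * (X - C b) := by
  have hd1ne : (p^2*q^2 - 3*r*p^3 - 6*p^2*s - 4*q^3 + 14*p*q*r + 16*s*q - 18*r^2) ≠ 0 := ne_of_gt hD1
  obtain ⟨al, hal⟩ : ∃ al : ℝ, (2*(p^2*q^2 - 3*r*p^3 - 6*p^2*s - 4*q^3 + 14*p*q*r + 16*s*q - 18*r^2)) * al = (9*p^3*s - p^2*q*r - 32*p*q*s - 3*p*r^2 + 4*q^2*r + 48*r*s) :=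
    ⟨(9*p^3*s - p^2*q*r - 32*p*q*s - 3*p*r^2 + 4*q^2*r + 48*r*s) / (2*(p^2*q^2 - 3*r*p^3 - 6*p^2*s - 4*q^3 + 14*p*q*r + 16*s*q - 18*r^2)), by rw [mul_div_assoc', mul_div_right_comm, div_self (mul_ne_zero two_ne_zero hd1ne), one_mul]⟩
  have hMne : (2*(p^2*q^2 - 3*r*p^3 - 6*p^2*s - 4*q^3 + 14*p*q*r + 16*s*q - 18*r^2)) ≠ 0 := by positivity
  have h3 : (4*al^3 + 3*p*al^2 + 2*q*al + r) * (2*(p^2*q^2 - 3*r*p^3 - 6*p^2*s - 4*q^3 + 14*p*q*r + 16*s*q - 18*r^2))^3 = 0 := by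
    linear_combination (54*p^6*r - 18*p^5*q^2 - 432*p^4*q*r + 136*p^3*q^3 + 648*p^3*r^2 + 720*p^2*q^2*r - 256*p*q^4 - 2592*p*q*r^2 + 512*q^3*r + 1728*r^3) * hD + (4*(((2*(p^2*q^2 - 3*r*p^3 - 6*p^2*s - 4*q^3 + 14*p*q*r + 16*s*q - 18*r^2))*al)^2+((2*(p^2*q^2 - 3*r*p^3 - 6*p^2*s - 4*q^3 + 14*p*q*r + 16*s*q - 18*r^2))*al)*(9*p^3*s - p^2*q*r - 32*p*q*s - 3*p*r^2 + 4*q^2*r + 48*r*s)+(9*p^3*s - p^2*q*r - 32*p*q*s - 3*p*r^2 + 4*q^2*r + 48*r*s)^2) + 3*p*(2*(p^2*q^2 - 3*r*p^3 - 6*p^2*s - 4*q^3 + 14*p*q*r + 16*s*q - 18*r^2))*(((2*(p^2*q^2 - 3*r*p^3 - 6*p^2*s - 4*q^3 + 14*p*q*r + 16*s*q - 18*r^2))*al)+(9*p^3*s - p^2*q*r - 32*p*q*s - 3*p*r^2 + 4*q^2*r + 48*r*s)) + 2*q*(2*(p^2*q^2 - 3*r*p^3 - 6*p^2*s - 4*q^3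 + 14*p*q*r + 16*s*q - 18*r^2))^2) * hal
  have h4 : (al^4 + p*al^3 + q*al^2 + r*al + s) * (2*(p^2*q^2 - 3*r*p^3 - 6*p^2*s - 4*q^3 + 14*p*q*r + 16*s*q - 18*r^2))^4 = 0 := by
    linear_combination (162*p^9*r*s - 54*p^8*q^2*s - 54*p^8*q*r^2 + 81*p^8*s^2 + 30*p^7*q^3*r - 1998*p^7*q*r*s - 162*p^7*r^3 - 4*p^6*q^5 + 636*p^6*q^3*s + 783*p^6*q^2*r^2 - 864*p^6*q*s^2 + 2106*p^6*r^2*s - 384*p^5*q^4*r + 8208*p^5*q^2*r*s + 810*p^5*q*r^3 + 48*p^4*q^6 - 2640*p^4*q^4*s - 3540*p^4*q^3*r^2 + 3456*p^4*q^2*s^2 - 16848*p^4*q*r^2*s - 1863*p^4*r^4 + 1632*p^3*q^5*r - 11520*p^3*q^3*r*s + 2592*p^3*q^2*r^3 + 10368*p^3*r^3*s - 192*p^2*q^7 + 4352*p^2*q^5*s + 4384*p^2*q^4*r^2 - 6144*p^2*q^3*s^2 + 34560*p^2*q^2*r^2*s + 6480*p^2*q*r^4 - 2304*p*q^6*r +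 1024*p*q^4*r*s - 13056*p*q^3*r^3 - 41472*p*q*r^3*s - 5184*p*r^5 + 256*q^8 - 2048*q^6*s + 2816*q^5*r^2 + 4096*q^4*s^2 - 3072*q^3*r^2*s + 6912*q^2*r^4 + 20736*r^4*s) * hD + ((((2*(p^2*q^2 - 3*r*p^3 - 6*p^2*s - 4*q^3 + 14*p*q*r + 16*s*q - 18*r^2))*al)^3+((2*(p^2*q^2 - 3*r*p^3 - 6*p^2*s - 4*q^3 + 14*p*q*r + 16*s*q - 18*r^2))*al)^2*(9*p^3*s - p^2*q*r - 32*p*q*s - 3*p*r^2 + 4*q^2*r + 48*r*s)+((2*(p^2*q^2 - 3*r*p^3 - 6*p^2*s - 4*q^3 + 14*p*q*r + 16*s*q - 18*r^2))*al)*(9*p^3*s - p^2*q*r - 32*p*q*s - 3*p*r^2 + 4*q^2*r + 48*r*s)^2+(9*p^3*s - p^2*q*r - 32*p*q*s - 3*p*r^2 + 4*q^2*r + 48*r*s)^3) + p*(((2*(p^2*q^2 - 3*r*p^3 - 6*p^2*s - 4*q^3 + 14*p*q*r + 16*s*q - 18*r^2))*al)^2+((2*(p^2*q^2 - 3*r*p^3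 - 6*p^2*s - 4*q^3 + 14*p*q*r + 16*s*q - 18*r^2))*al)*(9*p^3*s - p^2*q*r - 32*p*q*s - 3*p*r^2 + 4*q^2*r + 48*r*s)+(9*p^3*s - p^2*q*r - 32*p*q*s - 3*p*r^2 + 4*q^2*r + 48*r*s)^2)*(2*(p^2*q^2 - 3*r*p^3 - 6*p^2*s - 4*q^3 + 14*p*q*r + 16*s*q - 18*r^2)) + q*(((2*(p^2*q^2 - 3*r*p^3 - 6*p^2*s - 4*q^3 + 14*p*q*r + 16*s*q - 18*r^2))*al)+(9*p^3*s - p^2*q*r - 32*p*q*s - 3*p*r^2 + 4*q^2*r + 48*r*s))*(2*(p^2*q^2 - 3*r*p^3 - 6*p^2*s - 4*q^3 + 14*p*q*r + 16*s*q - 18*r^2))^2 + r*(2*(p^2*q^2 - 3*r*p^3 - 6*p^2*s - 4*q^3 + 14*p*q*r + 16*s*q - 18*r^2))^3) * hal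
  have hfp : 4*al^3 + 3*p*al^2 + 2*q*al + r = 0 := by
    rcases mul_eq_zero.mp h3 with h | h
    · exact h
    · exact absurd h (pow_ne_zero 3 hMne)
  have hf : al^4 + p*al^3 + q*al^2 + r*al + s = 0 := by
    rcases mul_eq_zero.mp h4 with h | h
    · exact h
    · exact absurd h (pow_ne_zero 4 hMne)
  have hr : r = -(al^2*(-p-2*al) + 2*al*(q+2*p*al+3*al^2)) := by linear_combination hfp
  have hs : s = al^2*(q+2*p*al+3*al^2) := by linear_combination hf - al*hfp
  have hkey : (p^2*q^2 - 3*r*p^3 - 6*p^2*s - 4*q^3 + 14*p*q*r + 16*s*q - 18*r^2) = ((-p-2*al)^2 - 4*(q+2*p*al+3*al^2)) * (al^2 - (-p-2*al)*al + (q+2*p*al+3*al^2))^2 := by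
    linear_combination (-18*r - 3*p^3 + 14*p*q + 54*p*al^2 + 36*q*al + 72*al^3) * hr + (-6*p^2 + 16*q) * hs
  have hwne : al^2 - (-p-2*al)*al + (q+2*p*al+3*al^2) ≠ 0 := by
    intro h
    rw [h] at hkey
    simp at hkey
    exact hd1ne hkey
  have hw2 : 0 < (al^2 - (-p-2*al)*al + (q+2*p*al+3*al^2))^2 := pow_two_pos_of_ne_zero hwne
  have hdisc : 0 < (-p-2*al)^2 - 4*(q+2*p*al+3*al^2) := by
    have h5 : 0 < ((-p-2*al)^2 - 4*(q+2*p*al+3*al^2)) *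
        (al^2 - (-p-2*al)*al + (q+2*p*al+3*al^2))^2 := by
      have h6 := hD1
      rw [hkey] at h6
      exact h6
    rcases mul_pos_iff.mp h5 with ⟨h, _⟩ | ⟨_, h⟩
    · exact h
    · linarith
  obtain ⟨t, ht, ht2⟩ : ∃ t : ℝ, 0 < t ∧ t^2 = (-p-2*al)^2 - 4*(q+2*p*al+3*al^2) :=
    ⟨Real.sqrt _, Real.sqrt_pos.mpr hdisc, Real.sq_sqrt hdisc.le⟩
  obtain ⟨a, b, hsum, hprod, hdiff⟩ :
      ∃ a b : ℝ, a + b = -p - 2*al ∧ a * b = q + 2*p*al + 3*al^2 ∧ a - b = t :=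
    ⟨(-p-2*al+t)/2, (-p-2*al-t)/2, by ring, by linear_combination (-1/4 : ℝ)*ht2, by ring⟩
  refine ⟨al, a, b, ?_, ?_, ?_, ?_⟩
  · intro h
    exact hwne (by linear_combination (al - b)*h + al*hsum - hprod)
  · intro h
    exact hwne (by linear_combination (al - a)*h + al*hsum - hprod)
  · intro h
    linarith
  · have ep : p = -(2*al + a + b) := by linarith
    have eq' : q = al^2 + 2*al*(a+b) + a*b := by linear_combination (-2*al)*hsum - hprod
    have er : r = -(al^2*(a+b) + 2*al*(a*b)) := by
      linear_combination hfp + al^2*hsum + 2*al*hprod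
    have es : s = al^2*(a*b) := by linear_combination hf - al*hfp - al^2*hprod
    rw [ep, eq', er, es]
    simp only [map_neg, map_add, map_mul, map_pow, map_ofNat]
    ring
end

section
/- Let f(x) = x⁴ + px³ + qx² + rx + s with D = 0, D1 = 0, 3p² - 8q > 0, and p³ - 4pq + 8r = 0. Then f has two distinct real double roots. -/
open Polynomial in
theorem quartic_two_real_double_roots (p q r s : ℝ)
    (hD : (18*p^3*r*q*s - 4*q^3*p^2*s + 144*s*r^2*q + q^2*p^2*r^2 - 192*p*r*s^2 + 144*q*p^2*s^2 + 18*p*r^3*q - 4*p^3*r^3 - 128*q^2*s^2 + 16*q^4*s - 4*q^3*r^2 - 27*p^4*s^2 - 80*p*r*q^2*s - 6*p^2*r^2*s + 256*s^3 - 27*r^4) = 0)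
    (hD1 : (p^2*q^2 - 3*r*p^3 - 6*p^2*s - 4*q^3 + 14*p*q*r + 16*s*q - 18*r^2) = 0)
    (hpq : 3 * p ^ 2 - 8 * q > 0)
    (hp : p ^ 3 - 4 * p * q + 8 * r = 0) :
    ∃ α β : ℝ, α ≠ β ∧
      (X ^ 4 + C p * X ^ 3 + C q * X ^ 2 + C r * X + C s : ℝ[X]) =
        (X - C α) ^ 2 * (X - C β) ^ 2 := by
  have hr : r = (4*p*q - p^3)/8 := by linarith
  have key : (3*p^2 - 8*q) * (64*s - (4*q - p^2)^2) = 0 := by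
    linear_combination (-32)*hD1 + (-3*p^3 + 20*p*q - 72*r)*hp
  have hs : s = (4*q - p^2)^2/64 := by
    have h := mul_eq_zero.mp key
    rcases h with h | h
    · linarith
    · linarith
  set u : ℝ := (3*p^2 - 8*q)/16 with hu
  have hupos : 0 < u := by positivity
  set t : ℝ := Real.sqrt u with htdef
  have htpos : 0 < t := Real.sqrt_pos.mpr hupos
  have ht2 : t^2 = u := Real.sq_sqrt hupos.le
  refine ⟨-p/4 + t, -p/4 - t, by intro h; nlinarith, ?_⟩
  apply Polynomial.funext
  intro x
  simp only [eval_add, eval_mul, eval_pow, eval_sub, eval_X, eval_C]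
  rw [hr, hs]
  linear_combination (2*(x + p/4)^2 - t^2 - u) * ht2
end

section
/- Let f(x) = x⁴ + px³ + qx² + rx + s with D = 0, D1 = 0, 3p² - 8q > 0, and p³ - 4pq + 8r ≠ 0. Then f has a real triple root α and a real simple root β, and β - α = -3(p³ - 4pq + 8r)/(3p² - 8q); in particular β > α iff p³ - 4pq + 8r < 0. -/
open Polynomial in
theorem quartic_triple_and_single_root (p q r s : ℝ)
    (hD : (18*p^3*r*q*s - 4*q^3*p^2*s + 144*s*r^2*q + q^2*p^2*r^2 - 192*p*r*s^2 + 144*q*p^2*s^2 + 18*p*r^3*q - 4*p^3*r^3 - 128*q^2*s^2 + 16*q^4*s - 4*q^3*r^2 - 27*p^4*s^2 - 80*p*r*q^2*s - 6*p^2*r^2*s + 256*s^3 - 27*r^4) = 0)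
    (hD1 : (p^2*q^2 - 3*r*p^3 - 6*p^2*s - 4*q^3 + 14*p*q*r + 16*s*q - 18*r^2) = 0)
    (hpq : 3 * p ^ 2 - 8 * q > 0)
    (hp : p ^ 3 - 4 * p * q + 8 * r ≠ 0) :
    ∃ α β : ℝ, α ≠ β ∧
      (X ^ 4 + C p * X ^ 3 + C q * X ^ 2 + C r * X + C s : ℝ[X]) =
        (X - C α) ^ 3 * (X - C β) ∧
      β - α = -3 * (p ^ 3 - 4 * p * q + 8 * r) / (3 * p ^ 2 - 8 * q) ∧
      (β > α ↔ p ^ 3 - 4 * p * q + 8 * r < 0) := by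
  have hPne : (q - 3*p^2/8) ≠ 0 := by intro h; nlinarith
  have hPlt : (q - 3*p^2/8) < 0 := by nlinarith
  have hQne : (r - p*q/2 + p^3/8) ≠ 0 := by
    intro h; exact hp (by linear_combination 8*h)
  have hQ2 : (r - p*q/2 + p^3/8)^2 * (8*(q - 3*p^2/8)^3 + 27*(r - p*q/2 + p^3/8)^2)^2 = 0 := by
    linear_combination (2*(q - 3*p^2/8)^3) * hD -
      (18*(q - 3*p^2/8)^3*(r - p*q/2 + p^3/8)^2 + (81/2)*(r - p*q/2 + p^3/8)^4
        - 8*(q - 3*p^2/8)^4*(s - p*r/4 + p^2*q/16 - 3*p^4/256)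
        + 36*(q - 3*p^2/8)*(r - p*q/2 + p^3/8)^2*(s - p*r/4 + p^2*q/16 - 3*p^4/256)
        + 32*(q - 3*p^2/8)^2*(s - p*r/4 + p^2*q/16 - 3*p^4/256)^2) * hD1
  have hkey : 27*(r - p*q/2 + p^3/8)^2 + 8*(q - 3*p^2/8)^3 = 0 := by
    rcases mul_eq_zero.mp hQ2 with h | h
    · exact absurd (pow_eq_zero_iff two_ne_zero |>.mp h) hQne
    · have := pow_eq_zero_iff (n := 2) two_ne_zero |>.mp h
      linarith
  have hs0 : s = -(q - 3*p^2/8)^2/12 + p*r/4 - p^2*q/16 + 3*p^4/256 := by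
    have hPR : (q - 3*p^2/8) * (s - (-(q - 3*p^2/8)^2/12 + p*r/4 - p^2*q/16 + 3*p^4/256)) = 0 := by
      linear_combination (1/16)*hD1 + (1/24)*hkey
    rcases mul_eq_zero.mp hPR with h | h
    · exact absurd h hPne
    · linarith [sub_eq_zero.mp h]
  obtain ⟨a, ha2, ha3, haP⟩ :
      ∃ a : ℝ, a^2 = -(q - 3*p^2/8)/6 ∧ a^3 = (r - p*q/2 + p^3/8)/8 ∧
        -4*a*(q - 3*p^2/8) = 3*(r - p*q/2 + p^3/8) := by
    have hden : (4*(q - 3*p^2/8)) ≠ 0 := mul_ne_zero (by norm_num) hPne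
    have ha : -3*(r - p*q/2 + p^3/8)/(4*(q - 3*p^2/8)) * (4*(q - 3*p^2/8))
        = -3*(r - p*q/2 + p^3/8) := div_mul_cancel₀ _ hden
    refine ⟨-3*(r - p*q/2 + p^3/8)/(4*(q - 3*p^2/8)), ?_, ?_, ?_⟩
    · apply mul_right_cancel₀ (mul_ne_zero (by norm_num : (16:ℝ) ≠ 0) (pow_ne_zero 2 hPne))
      linear_combination (-3*(r - p*q/2 + p^3/8)/(4*(q - 3*p^2/8))*(4*(q - 3*p^2/8))
        - 3*(r - p*q/2 + p^3/8))*ha + (1/3)*hkey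
    · apply mul_right_cancel₀ (mul_ne_zero (by norm_num : (64:ℝ) ≠ 0) (pow_ne_zero 3 hPne))
      linear_combination ((-3*(r - p*q/2 + p^3/8)/(4*(q - 3*p^2/8))*(4*(q - 3*p^2/8)))^2
        - 3*(r - p*q/2 + p^3/8)*(-3*(r - p*q/2 + p^3/8)/(4*(q - 3*p^2/8))*(4*(q - 3*p^2/8)))
        + 9*(r - p*q/2 + p^3/8)^2)*ha + (-(r - p*q/2 + p^3/8))*hkey
    · linear_combination (-1 : ℝ)*ha
  have hane : a ≠ 0 := by
    intro h
    apply hQne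
    rw [h] at ha3
    norm_num at ha3
    linarith
  clear hD hD1 hQ2 hkey hQne
  refine ⟨a - p/4, -3*a - p/4, ?_, ?_, ?_, ?_⟩
  · intro h
    exact hane (by linarith)
  · have hqe : q = 3*(a - p/4)^2 + 3*(a - p/4)*(-3*a - p/4) := by
      linear_combination (6:ℝ)*ha2
    have hre : r = -((a - p/4)^3 + 3*(a - p/4)^2*(-3*a - p/4)) := by
      linear_combination (-(8:ℝ))*ha3 + (3*p)*ha2
    have hse : s = (a - p/4)^3 * (-3*a - p/4) := by
      linear_combination hs0 + (3*(a^2 - (q - 3*p^2/8)/6) + 3*p^2/8)*ha2 + (-2*p)*ha3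
    apply Polynomial.funext
    intro x
    simp only [eval_add, eval_mul, eval_pow, eval_X, eval_C, eval_sub]
    linear_combination x^2*hqe + x*hre + hse
  · rw [eq_div_iff (ne_of_gt hpq)]
    linear_combination (-(8:ℝ))*haP
  · constructor
    · intro h
      have h1 : -4*a*(q - 3*p^2/8) < 0 := mul_neg_of_pos_of_neg (by linarith) hPlt
      rw [haP] at h1
      linarith
    · intro h
      rcases lt_trichotomy a 0 with h' | h' | h'
      · show -3*a - p/4 > a - p/4
        linarith
      · exact absurd h' hane
      · exfalso
        have h1 : 0 < -4*a*(q - 3*p^2/8) := mul_pos_of_neg_of_neg (by linarith) hPlt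
        rw [haP] at h1
        linarith
end

section
/- Let f(x) = x⁴ + px³ + qx² + rx + s. Then f has a quadruple real root if and only if D = 0, D1 = 0, and 3p² - 8q = 0, where D is the discriminant and D1 = p²q² - 3rp³ - 6p²s - 4q³ + 14pqr + 16sq - 18r²; in that case the root is -p/4. -/
open Polynomial in
private lemma quartic_expand (α : ℝ) :
    ((X - C α) ^ 4 : ℝ[X]) =
      X ^ 4 + C (-4*α) * X ^ 3 + C (6*α^2) * X ^ 2 + C (-4*α^3) * X + C (α^4) := by
  simp only [map_neg, map_mul, map_pow, map_ofNat]
  ring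

open Polynomial in
private lemma quartic_coeffs (p q r s α : ℝ)
    (h : (X ^ 4 + C p * X ^ 3 + C q * X ^ 2 + C r * X + C s : ℝ[X]) = (X - C α) ^ 4) :
    p = -4*α ∧ q = 6*α^2 ∧ r = -4*α^3 ∧ s = α^4 := by
  rw [quartic_expand] at h
  refine ⟨?_, ?_, ?_, ?_⟩
  · have := congrArg (fun f => Polynomial.coeff f 3) h
    simp only [coeff_add, coeff_C_mul, coeff_X_pow, coeff_X, coeff_C] at this
    norm_num at this
    linarith
  · have := congrArg (fun f => Polynomial.coeff f 2) h
    simp only [coeff_add, coeff_C_mul, coeff_X_pow, coeff_X, coeff_C] at this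
    norm_num at this
    linarith
  · have := congrArg (fun f => Polynomial.coeff f 1) h
    simp only [coeff_add, coeff_C_mul, coeff_X_pow, coeff_X, coeff_C] at this
    norm_num at this
    linarith
  · have := congrArg (fun f => Polynomial.coeff f 0) h
    simp only [coeff_add, coeff_C_mul, coeff_X_pow, coeff_X, coeff_C] at this
    norm_num at this
    linarith

open Polynomial in
theorem quartic_quadruple_root_iff (p q r s : ℝ) :
    ((∃ α : ℝ, (X ^ 4 + C p * X ^ 3 + C q * X ^ 2 + C r * X + C s : ℝ[X]) =
        (X - C α) ^ 4) ↔
      ((18*p^3*r*q*s - 4*q^3*p^2*s + 144*s*r^2*q + q^2*p^2*r^2 - 192*p*r*s^2 + 144*q*p^2*s^2 + 18*p*r^3*q - 4*p^3*r^3 - 128*q^2*s^2 + 16*q^4*s - 4*q^3*r^2 - 27*p^4*s^2 - 80*p*r*q^2*s - 6*p^2*r^2*s + 256*s^3 - 27*r^4) = 0 ∧ (p^2*q^2 - 3*r*p^3 - 6*p^2*s - 4*q^3 + 14*p*q*r + 16*s*q - 18*r^2) = 0 ∧ 3 * p ^ 2 - 8 * q = 0)) ∧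
    (∀ α : ℝ, (X ^ 4 + C p * X ^ 3 + C q * X ^ 2 + C r * X + C s : ℝ[X]) =
        (X - C α) ^ 4 → α = -p / 4) := by
  constructor
  · constructor
    · rintro ⟨α, h⟩
      obtain ⟨hp, hq, hr, hs⟩ := quartic_coeffs p q r s α h
      subst hp hq hr hs
      refine ⟨by ring, by ring, by ring⟩
    · rintro ⟨hD, hD1, hq⟩
      have hq' : q = 3 * p ^ 2 / 8 := by linarith
      have hr2 : (p ^ 3 - 16 * r) ^ 2 = 0 := by
        have : -(9:ℝ)/128 * (p ^ 3 - 16 * r) ^ 2 = 0 := by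
          rw [← hD1, hq']; ring
        linarith [sq_nonneg (p ^ 3 - 16 * r)]
      have hr' : r = p ^ 3 / 16 := by
        have := pow_eq_zero_iff (n := 2) (by norm_num) |>.mp hr2
        linarith
      have hs3 : (256 * s - p ^ 4) ^ 3 = 0 := by
        have : ((256 : ℝ) * s - p ^ 4) ^ 3 = 65536 * (18*p^3*r*q*s - 4*q^3*p^2*s + 144*s*r^2*q + q^2*p^2*r^2 - 192*p*r*s^2 + 144*q*p^2*s^2 + 18*p*r^3*q - 4*p^3*r^3 - 128*q^2*s^2 + 16*q^4*s - 4*q^3*r^2 - 27*p^4*s^2 - 80*p*r*q^2*s - 6*p^2*r^2*s + 256*s^3 - 27*r^4) := by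
          rw [hq', hr']; ring
        rw [this, hD]; ring
      have hs' : s = p ^ 4 / 256 := by
        have := pow_eq_zero_iff (n := 3) (by norm_num) |>.mp hs3
        linarith
      refine ⟨-p/4, ?_⟩
      rw [quartic_expand, hq', hr', hs',
        show (-4*(-p/4)) = p by ring, show (6*(-p/4)^2) = 3*p^2/8 by ring,
        show (-4*(-p/4)^3) = p^3/16 by ring, show ((-p/4)^4) = p^4/256 by ring]
  · intro α h
    obtain ⟨hp, _, _, _⟩ := quartic_coeffs p q r s α h
    linarith
end
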